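/- Fix integers K ≥ 2, d ≥ 1, a real λ > 0, set Δt = λ/K², and let S : ℝ → ℝ satisfy |S(s_k)| < 1 for every multi-index k ∈ {1,…,K−1}^d. Let (Ω, F, P) be a probability space, let ε > 0, and for each m ∈ ℕ and each index i ∈ {1,…,K−1}^d let ε^m_i : Ω → ℝ be a random variable with |ε^m_i| ≤ ε almost surely and E[ε^m_i · ε^{m'}_{i'}] = 0 whenever (m, i) ≠ (m', i'). Define for each ω the random vector E^n(ω) = Σ_{m=0}^{n−1} Σ_k (2/K)^d · S(s_k)^{n−1−m} · ⟨ε^m(ω), v_k⟩ · v_k. Then for every n ≥ 1, E[‖E^n‖₂²] ≤ ε² · Σ_{k ∈ {1,…,K−1}^d} 1/(1 − S(s_k)²); equivalently, for the discrete L² norm ‖x‖_{L²} = K^{−d/2}‖x‖₂, E[‖E^n‖_{L²}²] ≤ ε² · K^{−d} Σ_k 1/(1 − S(s_k)²). -/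

import Mathlib

open Real MeasureTheory

/-- The eigenvalue arguments `s_k = −Δt·λ_k^h` of the stability function, with
`Δt = λ/K²` and multi-index `k` with components `(k j) + 1 ∈ {1,…,K−1}`. -/
noncomputable def sVal (K d : ℕ) (lam : ℝ) (k : Fin d → Fin (K - 1)) : ℝ :=
  -(4 * (lam / (K : ℝ) ^ 2) * (K : ℝ) ^ 2
    * ∑ j, Real.sin (π * (((k j : ℕ) : ℝ) + 1) / (2 * K)) ^ 2)

/-- The discrete sine eigenvector `v_k` of the `d`-dimensional finite-difference
Laplacian: `(v_k)_i = Π_j sin(π i_j k_j / K)`. -/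
noncomputable def vVec (K d : ℕ) (k i : Fin d → Fin (K - 1)) : ℝ :=
  ∏ j, Real.sin (π * (((i j : ℕ) : ℝ) + 1) * (((k j : ℕ) : ℝ) + 1) / K)

open Finset

lemma tele_cos (θ : ℝ) (K : ℕ) :
    ∑ i ∈ range K, (2 * Real.sin (θ/2) * Real.cos (i * θ))
      = Real.sin ((2*(K:ℝ)-1)*θ/2) + Real.sin (θ/2) := by
  have h : ∀ i : ℕ, 2 * Real.sin (θ/2) * Real.cos (i * θ)
      = Real.sin ((2*((i:ℝ)+1)-1)*θ/2) - Real.sin ((2*(i:ℝ)-1)*θ/2) := by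
    intro i
    rw [Real.sin_sub_sin]
    ring_nf
  calc ∑ i ∈ range K, (2 * Real.sin (θ/2) * Real.cos (i * θ))
      = ∑ i ∈ range K, (Real.sin ((2*((i:ℝ)+1)-1)*θ/2) - Real.sin ((2*(i:ℝ)-1)*θ/2)) := by
        exact Finset.sum_congr rfl fun i _ => h i
    _ = Real.sin ((2*(K:ℝ)-1)*θ/2) - Real.sin ((2*(0:ℝ)-1)*θ/2) := by
        have := Finset.sum_range_sub (fun i : ℕ => Real.sin ((2*(i:ℝ)-1)*θ/2)) K
        simpa using this
    _ = Real.sin ((2*(K:ℝ)-1)*θ/2) + Real.sin (θ/2) := by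
        rw [show (2*(0:ℝ)-1)*θ/2 = -(θ/2) by ring, Real.sin_neg]; ring

lemma cos_sum_nat (K t : ℕ) (hK : 1 ≤ K) (ht : 0 < t) (ht2 : t < 2*K) :
    ∑ i ∈ range K, Real.cos (π * t * i / K) = (1 - (-1:ℝ)^t) / 2 := by
  have hKR : (0:ℝ) < K := by exact_mod_cast hK
  set θ : ℝ := π * t / K with hθ
  have hhalf : θ/2 = π * t / (2*K) := by rw [hθ]; ring
  have h0 : 0 < θ/2 := by
    rw [hhalf]; positivity
  have hlt : θ/2 < π := by
    rw [hhalf, div_lt_iff₀ (by positivity)]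
    calc π * t < π * (2*K) := by
          apply mul_lt_mul_of_pos_left _ Real.pi_pos
          exact_mod_cast ht2
      _ = π * (2*K) := rfl
  have hsin : Real.sin (θ/2) ≠ 0 := ne_of_gt (Real.sin_pos_of_pos_of_lt_pi h0 hlt)
  have harg : ∀ i : ℕ, π * t * i / K = (i:ℝ) * θ := by
    intro i; rw [hθ]; field_simp
  have htop : (2*(K:ℝ)-1)*θ/2 = t * π - θ/2 := by
    rw [hθ]; field_simp
  have h1 := tele_cos θ K
  rw [htop, Real.sin_nat_mul_pi_sub] at h1
  have h2 : ∑ i ∈ range K, (2 * Real.sin (θ/2) * Real.cos (i * θ))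
      = 2 * Real.sin (θ/2) * ∑ i ∈ range K, Real.cos ((i:ℝ) * θ) := by
    rw [Finset.mul_sum]
  rw [h2] at h1
  have h3 : ∑ i ∈ range K, Real.cos (π * t * i / K)
      = ∑ i ∈ range K, Real.cos ((i:ℝ) * θ) := by
    exact Finset.sum_congr rfl fun i _ => by rw [harg]
  rw [h3]
  have h4 : (2 : ℝ) * Real.sin (θ/2) ≠ 0 := by
    simp [hsin]
  field_simp
  have h5 : Real.sin (θ/2) * ((∑ i ∈ range K, Real.cos ((i:ℝ)*θ)) * 2)
      = Real.sin (θ/2) * (1 - (-1:ℝ)^t) := by linear_combination h1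
  exact mul_left_cancel₀ hsin h5

lemma sin_orth_lt (K a b : ℕ) (hK : 1 ≤ K) (hb1 : 1 ≤ b) (hba : b < a) (ha2 : a < K) :
    ∑ i ∈ range K, Real.sin (π * i * a / K) * Real.sin (π * i * b / K) = 0 := by
  have hterm : ∀ i : ℕ, Real.sin (π * i * a / K) * Real.sin (π * i * b / K)
      = (Real.cos (π * ((a:ℝ)-b) * i / K) - Real.cos (π * ((a:ℝ)+b) * i / K)) / 2 := by
    intro i
    rw [Real.cos_sub_cos,
      show (π * ((a:ℝ)-b) * i / K + π * ((a:ℝ)+b) * i / K)/2 = π * i * a / K by ring,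
      show (π * ((a:ℝ)-b) * i / K - π * ((a:ℝ)+b) * i / K)/2 = -(π * i * b / K) by ring,
      Real.sin_neg]
    ring
  have hc1 : ∑ i ∈ range K, Real.cos (π * ((a:ℝ)-b) * i / K)
      = (1 - (-1:ℝ)^(a-b)) / 2 := by
    have hcast : ((a - b : ℕ) : ℝ) = (a:ℝ) - b := Nat.cast_sub (le_of_lt hba)
    rw [← hcast]
    exact cos_sum_nat K (a-b) hK (by omega) (by omega)
  have hc2 : ∑ i ∈ range K, Real.cos (π * ((a:ℝ)+b) * i / K)
      = (1 - (-1:ℝ)^(a+b)) / 2 := by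
    have hcast : ((a + b : ℕ) : ℝ) = (a:ℝ) + b := by push_cast; ring
    rw [← hcast]
    exact cos_sum_nat K (a+b) hK (by omega) (by omega)
  have hpow : (-1:ℝ)^(a+b) = (-1:ℝ)^(a-b) := by
    have : a + b = (a - b) + 2*b := by omega
    rw [this, pow_add, pow_mul]
    norm_num
  calc ∑ i ∈ range K, Real.sin (π * i * a / K) * Real.sin (π * i * b / K)
      = ∑ i ∈ range K, (Real.cos (π * ((a:ℝ)-b) * i / K)
          - Real.cos (π * ((a:ℝ)+b) * i / K)) / 2 :=
        Finset.sum_congr rfl fun i _ => hterm i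
    _ = ((∑ i ∈ range K, Real.cos (π * ((a:ℝ)-b) * i / K))
          - ∑ i ∈ range K, Real.cos (π * ((a:ℝ)+b) * i / K)) / 2 := by
        rw [← Finset.sum_sub_distrib, ← Finset.sum_div]
    _ = 0 := by rw [hc1, hc2, hpow]; ring

lemma sin_orth_nat (K a b : ℕ) (hK : 1 ≤ K) (ha1 : 1 ≤ a) (ha2 : a < K)
    (hb1 : 1 ≤ b) (hb2 : b < K) :
    ∑ i ∈ range K, Real.sin (π * i * a / K) * Real.sin (π * i * b / K)
      = if a = b then (K:ℝ)/2 else 0 := by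
  rcases lt_trichotomy a b with h | h | h
  · rw [if_neg (by omega)]
    have := sin_orth_lt K b a hK ha1 h hb2
    rw [← this]
    exact Finset.sum_congr rfl fun i _ => mul_comm _ _
  · subst h
    rw [if_pos rfl]
    have hterm : ∀ i : ℕ, Real.sin (π * i * a / K) * Real.sin (π * i * a / K)
        = 1/2 - Real.cos (π * ((a:ℝ)+a) * i / K) / 2 := by
      intro i
      have h2x : π * ((a:ℝ)+a) * i / K = 2 * (π * i * a / K) := by ring
      rw [← sq, Real.sin_sq (π * i * a / K), Real.cos_sq (π * i * a / K), h2x]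
      ring
    have hc2 : ∑ i ∈ range K, Real.cos (π * ((a:ℝ)+a) * i / K)
        = (1 - (-1:ℝ)^(a+a)) / 2 := by
      have hcast : ((a + a : ℕ) : ℝ) = (a:ℝ) + a := by push_cast; ring
      rw [← hcast]
      exact cos_sum_nat K (a+a) hK (by omega) (by omega)
    have hpow : (-1:ℝ)^(a+a) = 1 := by
      rw [show a + a = 2*a by omega, pow_mul]; norm_num
    calc ∑ i ∈ range K, Real.sin (π * i * a / K) * Real.sin (π * i * a / K)
        = ∑ i ∈ range K, (1/2 - Real.cos (π * ((a:ℝ)+a) * i / K) / 2) :=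
          Finset.sum_congr rfl fun i _ => hterm i
      _ = (K:ℝ) * (1/2) - (∑ i ∈ range K, Real.cos (π * ((a:ℝ)+a) * i / K)) / 2 := by
          rw [Finset.sum_sub_distrib, Finset.sum_const, ← Finset.sum_div]
          simp [mul_comm]
      _ = (K:ℝ)/2 := by rw [hc2, hpow]; ring
  · rw [if_neg (by omega)]
    exact sin_orth_lt K a b hK hb1 h ha2

lemma sin_orth_fin (K : ℕ) (hK : 2 ≤ K) (a b : Fin (K-1)) :
    ∑ x : Fin (K-1), Real.sin (π * (((x:ℕ):ℝ)+1) * (((a:ℕ):ℝ)+1) / K)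
        * Real.sin (π * (((x:ℕ):ℝ)+1) * (((b:ℕ):ℝ)+1) / K)
      = if a = b then (K:ℝ)/2 else 0 := by
  have hK1 : K - 1 + 1 = K := by omega
  set g : ℕ → ℝ := fun i =>
    Real.sin (π * i * ((a:ℕ)+1 : ℕ) / K) * Real.sin (π * i * ((b:ℕ)+1 : ℕ) / K) with hg
  have h1 : ∑ x : Fin (K-1), Real.sin (π * (((x:ℕ):ℝ)+1) * (((a:ℕ):ℝ)+1) / K)
        * Real.sin (π * (((x:ℕ):ℝ)+1) * (((b:ℕ):ℝ)+1) / K)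
      = ∑ i ∈ range (K-1), g (i+1) := by
    rw [Fin.sum_univ_eq_sum_range (fun i : ℕ =>
      Real.sin (π * ((i:ℝ)+1) * (((a:ℕ):ℝ)+1) / K)
        * Real.sin (π * ((i:ℝ)+1) * (((b:ℕ):ℝ)+1) / K))]
    refine Finset.sum_congr rfl fun i _ => ?_
    rw [hg]; push_cast; ring_nf
  have h2 : ∑ i ∈ range K, g i = ∑ i ∈ range (K-1), g (i+1) + g 0 := by
    rw [← hK1]; exact Finset.sum_range_succ' g (K-1)
  have h3 : g 0 = 0 := by
    rw [hg]; simp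
  have h4 := sin_orth_nat K ((a:ℕ)+1) ((b:ℕ)+1) (by omega) (by omega)
    (by have := a.isLt; omega) (by omega) (by have := b.isLt; omega)
  rw [h1, ← (by rw [h2, h3, add_zero] : ∑ i ∈ range K, g i = ∑ i ∈ range (K-1), g (i+1)), hg, h4]
  congr 1
  simp [Fin.ext_iff]

lemma vVec_orth (K d : ℕ) (hK : 2 ≤ K) (k k' : Fin d → Fin (K-1)) :
    ∑ i : Fin d → Fin (K-1), vVec K d k i * vVec K d k' i
      = if k = k' then ((K:ℝ)/2)^d else 0 := by
  have h1 : ∀ i : Fin d → Fin (K-1), vVec K d k i * vVec K d k' i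
      = ∏ j, (Real.sin (π * (((i j:ℕ):ℝ)+1) * (((k j:ℕ):ℝ)+1) / K)
          * Real.sin (π * (((i j:ℕ):ℝ)+1) * (((k' j:ℕ):ℝ)+1) / K)) := by
    intro i; rw [vVec, vVec, ← Finset.prod_mul_distrib]
  rw [Finset.sum_congr rfl fun i _ => h1 i]
  rw [← Fintype.prod_sum fun j (x : Fin (K-1)) =>
      Real.sin (π * (((x:ℕ):ℝ)+1) * (((k j:ℕ):ℝ)+1) / K)
        * Real.sin (π * (((x:ℕ):ℝ)+1) * (((k' j:ℕ):ℝ)+1) / K)]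
  have h2 : ∀ j, (∑ x : Fin (K-1),
      Real.sin (π * (((x:ℕ):ℝ)+1) * (((k j:ℕ):ℝ)+1) / K)
        * Real.sin (π * (((x:ℕ):ℝ)+1) * (((k' j:ℕ):ℝ)+1) / K))
      = if k j = k' j then (K:ℝ)/2 else 0 := fun j => sin_orth_fin K hK (k j) (k' j)
  rw [Finset.prod_congr rfl fun j _ => h2 j]
  by_cases h : k = k'
  · subst h; simp [div_pow]
  · rw [if_neg h]
    obtain ⟨j, hj⟩ : ∃ j, k j ≠ k' j := by
      by_contra hc; push_neg at hc; exact h (funext hc)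
    exact Finset.prod_eq_zero (Finset.mem_univ j) (by rw [if_neg hj])

lemma key_alg {ι : Type*} [Fintype ι] [DecidableEq ι] (s : Finset ℕ)
    (t : ℕ → ι → ℝ) (v : ι → ι → ℝ) (C : ℝ)
    (hv : ∀ k k', ∑ i, v k i * v k' i = if k = k' then C else 0) :
    ∑ i, (∑ m ∈ s, ∑ k, t m k * v k i)^2
      = C * ∑ m ∈ s, ∑ m' ∈ s, ∑ k, t m k * t m' k := by
  have hflat : ∀ i : ι, (∑ m ∈ s, ∑ k, t m k * v k i)
      = ∑ p ∈ s ×ˢ (Finset.univ : Finset ι), t p.1 p.2 * v p.2 i := by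
    intro i; rw [Finset.sum_product]
  calc ∑ i, (∑ m ∈ s, ∑ k, t m k * v k i)^2
      = ∑ i, ∑ p ∈ s ×ˢ (Finset.univ : Finset ι), ∑ q ∈ s ×ˢ (Finset.univ : Finset ι),
          (t p.1 p.2 * v p.2 i) * (t q.1 q.2 * v q.2 i) := by
        refine Finset.sum_congr rfl fun i _ => ?_
        rw [hflat i, sq, Finset.sum_mul_sum]
    _ = ∑ p ∈ s ×ˢ (Finset.univ : Finset ι), ∑ q ∈ s ×ˢ (Finset.univ : Finset ι),
          ∑ i, (t p.1 p.2 * v p.2 i) * (t q.1 q.2 * v q.2 i) := by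
        rw [Finset.sum_comm]
        refine Finset.sum_congr rfl fun p _ => Finset.sum_comm
    _ = ∑ p ∈ s ×ˢ (Finset.univ : Finset ι), ∑ q ∈ s ×ˢ (Finset.univ : Finset ι),
          t p.1 p.2 * t q.1 q.2 * (if p.2 = q.2 then C else 0) := by
        refine Finset.sum_congr rfl fun p _ => Finset.sum_congr rfl fun q _ => ?_
        rw [← hv p.2 q.2, Finset.mul_sum]
        exact Finset.sum_congr rfl fun i _ => by ring
    _ = ∑ p ∈ s ×ˢ (Finset.univ : Finset ι), ∑ m' ∈ s,
          C * (t p.1 p.2 * t m' p.2) := by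
        refine Finset.sum_congr rfl fun p _ => ?_
        rw [Finset.sum_product]
        refine Finset.sum_congr rfl fun m' _ => ?_
        have : ∀ k' : ι, t p.1 p.2 * t m' k' * (if p.2 = k' then C else 0)
            = if p.2 = k' then C * (t p.1 p.2 * t m' k') else 0 := by
          intro k'; split <;> ring
        rw [Finset.sum_congr rfl fun k' _ => this k', Finset.sum_ite_eq]
        simp
    _ = C * ∑ m ∈ s, ∑ m' ∈ s, ∑ k, t m k * t m' k := by
        rw [Finset.sum_product, Finset.mul_sum]
        refine Finset.sum_congr rfl fun m _ => ?_
        rw [Finset.sum_comm, Finset.mul_sum]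
        refine Finset.sum_congr rfl fun m' _ => ?_
        rw [Finset.mul_sum]


/-- Mean-square bound for the stochastic-rounding global
error: if the local rounding errors `ε^m_i` are a.s. bounded by `ε` and
pairwise uncorrelated across distinct `(m, i)`, then
`E[‖E^n‖₂²] ≤ ε² Σ_k 1/(1 − S(s_k)²)`, equivalently
`E[‖E^n‖_{L²}²] ≤ ε² K^{−d} Σ_k 1/(1 − S(s_k)²)`. -/
theorem stochastic_rounding_L2_bound (K d : ℕ) (hK : 2 ≤ K) (hd : 1 ≤ d)
    (lam : ℝ) (hlam : 0 < lam) (S : ℝ → ℝ)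
    (hS : ∀ k : Fin d → Fin (K - 1), |S (sVal K d lam k)| < 1)
    {Ω : Type*} [MeasureSpace Ω] [IsProbabilityMeasure (volume : Measure Ω)]
    (ε : ℝ) (hε : 0 < ε)
    (eps : ℕ → (Fin d → Fin (K - 1)) → Ω → ℝ)
    (hmeas : ∀ m i, Measurable (eps m i))
    (hbdd : ∀ m i, ∀ᵐ ω, |eps m i ω| ≤ ε)
    (huncorr : ∀ m i m' i', (m, i) ≠ (m', i') →
      ∫ ω, eps m i ω * eps m' i' ω = 0)
    (E : ℕ → Ω → (Fin d → Fin (K - 1)) → ℝ)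
    (hE : ∀ n ω i, E n ω i = ∑ m ∈ Finset.range n, ∑ k : Fin d → Fin (K - 1),
      (2 / (K : ℝ)) ^ d * S (sVal K d lam k) ^ (n - 1 - m)
        * (∑ i', eps m i' ω * vVec K d k i') * vVec K d k i)
    (n : ℕ) (hn : 1 ≤ n) :
    (∫ ω, ∑ i, E n ω i ^ 2)
      ≤ ε ^ 2 * ∑ k : Fin d → Fin (K - 1), 1 / (1 - S (sVal K d lam k) ^ 2) ∧
    (∫ ω, ((K : ℝ) ^ d)⁻¹ * ∑ i, E n ω i ^ 2)
      ≤ ε ^ 2 * ((K : ℝ) ^ d)⁻¹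
        * ∑ k : Fin d → Fin (K - 1), 1 / (1 - S (sVal K d lam k) ^ 2) := by
  classical
  have hKR : (0:ℝ) < K := by
    have : (0:ℕ) < K := by omega
    exact_mod_cast this
  have hC : (0:ℝ) < ((K:ℝ)/2)^d := by positivity
  set σ : (Fin d → Fin (K-1)) → ℝ := fun k => S (sVal K d lam k) with hσ
  set A : ℕ → (Fin d → Fin (K-1)) → ℝ :=
    fun m k => (2/(K:ℝ))^d * σ k ^ (n-1-m) with hA
  set X : ℕ → (Fin d → Fin (K-1)) → Ω → ℝ :=
    fun m k ω => ∑ i', eps m i' ω * vVec K d k i' with hX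
  -- integrability of products of eps
  have hInt : ∀ m i m' i', Integrable (fun ω => eps m i ω * eps m' i' ω) := by
    intro m i m' i'
    refine Integrable.mono' (integrable_const (ε*ε))
      (((hmeas m i).mul (hmeas m' i')).aestronglyMeasurable) ?_
    filter_upwards [hbdd m i, hbdd m' i'] with ω h1 h2
    rw [Real.norm_eq_abs, abs_mul]
    exact mul_le_mul h1 h2 (abs_nonneg _) (le_of_lt hε)
  have hXX : ∀ m m' k, (fun ω => X m k ω * X m' k ω)
      = fun ω => ∑ i', ∑ i'', (vVec K d k i' * vVec K d k i'')
          * (eps m i' ω * eps m' i'' ω) := by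
    intro m m' k
    funext ω
    rw [hX]
    dsimp only
    rw [Finset.sum_mul_sum]
    exact Finset.sum_congr rfl fun i' _ => Finset.sum_congr rfl fun i'' _ => by ring
  have hXXInt : ∀ m m' k, Integrable (fun ω => X m k ω * X m' k ω) := by
    intro m m' k
    rw [hXX]
    exact integrable_finset_sum _ fun i' _ =>
      integrable_finset_sum _ fun i'' _ => (hInt m i' m' i'').const_mul _
  have hIXX : ∀ m m' k, ∫ ω, X m k ω * X m' k ω
      = ∑ i', ∑ i'', (vVec K d k i' * vVec K d k i'')
          * ∫ ω, eps m i' ω * eps m' i'' ω := by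
    intro m m' k
    rw [hXX]
    rw [integral_finset_sum _ (fun i' _ =>
      integrable_finset_sum _ fun i'' _ => (hInt m i' m' i'').const_mul _)]
    refine Finset.sum_congr rfl fun i' _ => ?_
    rw [integral_finset_sum _ (fun i'' _ => (hInt m i' m' i'').const_mul _)]
    exact Finset.sum_congr rfl fun i'' _ => integral_const_mul _ _
  have hoff : ∀ m m' k, m ≠ m' → ∫ ω, X m k ω * X m' k ω = 0 := by
    intro m m' k h
    rw [hIXX]
    refine Finset.sum_eq_zero fun i' _ => Finset.sum_eq_zero fun i'' _ => ?_
    rw [huncorr m i' m' i'' (by simp [h]), mul_zero]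
  have hepssq : ∀ m i, ∫ ω, eps m i ω * eps m i ω ≤ ε^2 := by
    intro m i
    calc ∫ ω, eps m i ω * eps m i ω ≤ ∫ _ω, (ε^2 : ℝ) := by
          apply integral_mono_ae (hInt m i m i) (integrable_const _)
          filter_upwards [hbdd m i] with ω h1
          nlinarith [abs_nonneg (eps m i ω), sq_abs (eps m i ω)]
      _ = ε^2 := by simp
  have hdiag : ∀ m k, ∫ ω, X m k ω * X m k ω ≤ ε^2 * ((K:ℝ)/2)^d := by
    intro m k
    rw [hIXX]
    have h2 : ∀ i', ∑ i'', (vVec K d k i' * vVec K d k i'')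
        * ∫ ω, eps m i' ω * eps m i'' ω
        = (vVec K d k i' * vVec K d k i') * ∫ ω, eps m i' ω * eps m i' ω := by
      intro i'
      refine Finset.sum_eq_single i' (fun i'' _ hne => ?_) (by simp)
      rw [huncorr m i' m i'' (by simpa using (Ne.symm hne)), mul_zero]
    rw [Finset.sum_congr rfl fun i' _ => h2 i']
    have h3 : ∑ i', (vVec K d k i' * vVec K d k i') * (ε^2)
        = ε^2 * ((K:ℝ)/2)^d := by
      rw [← Finset.sum_mul, vVec_orth K d hK k k, if_pos rfl, mul_comm]
    rw [← h3]
    refine Finset.sum_le_sum fun i' _ => ?_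
    exact mul_le_mul_of_nonneg_left (hepssq m i') (mul_self_nonneg _)
  -- pointwise expansion
  have hpt : ∀ ω, ∑ i, E n ω i ^ 2
      = ((K:ℝ)/2)^d * ∑ m ∈ Finset.range n, ∑ m' ∈ Finset.range n,
          ∑ k, (A m k * A m' k) * (X m k ω * X m' k ω) := by
    intro ω
    have hE' : ∀ i, E n ω i
        = ∑ m ∈ Finset.range n, ∑ k, (A m k * X m k ω) * vVec K d k i := by
      intro i
      rw [hE n ω i]
    rw [Finset.sum_congr rfl fun i _ => by rw [hE' i],
      key_alg (Finset.range n) (fun m k => A m k * X m k ω) (vVec K d)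
        (((K:ℝ)/2)^d) (vVec_orth K d hK)]
    congr 1
    refine Finset.sum_congr rfl fun m _ => Finset.sum_congr rfl fun m' _ =>
      Finset.sum_congr rfl fun k _ => by ring
  -- compute the integral
  have hmain : ∫ ω, ∑ i, E n ω i ^ 2
      = ((K:ℝ)/2)^d * ∑ m ∈ Finset.range n, ∑ m' ∈ Finset.range n,
          ∑ k, (A m k * A m' k) * ∫ ω, X m k ω * X m' k ω := by
    have hint2 : ∀ m m', Integrable (fun ω =>
        ∑ k, (A m k * A m' k) * (X m k ω * X m' k ω)) := fun m m' =>
      integrable_finset_sum _ fun k _ => (hXXInt m m' k).const_mul _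
    calc ∫ ω, ∑ i, E n ω i ^ 2
        = ∫ ω, ((K:ℝ)/2)^d * ∑ m ∈ Finset.range n, ∑ m' ∈ Finset.range n,
            ∑ k, (A m k * A m' k) * (X m k ω * X m' k ω) := by
          simp only [hpt]
      _ = ((K:ℝ)/2)^d * ∫ ω, ∑ m ∈ Finset.range n, ∑ m' ∈ Finset.range n,
            ∑ k, (A m k * A m' k) * (X m k ω * X m' k ω) :=
          integral_const_mul _ _
      _ = ((K:ℝ)/2)^d * ∑ m ∈ Finset.range n, ∑ m' ∈ Finset.range n,
            ∑ k, (A m k * A m' k) * ∫ ω, X m k ω * X m' k ω := by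
          rw [integral_finset_sum _ (fun m _ =>
            integrable_finset_sum _ fun m' _ => hint2 m m')]
          congr 1
          refine Finset.sum_congr rfl fun m _ => ?_
          rw [integral_finset_sum _ (fun m' _ => hint2 m m')]
          refine Finset.sum_congr rfl fun m' _ => ?_
          rw [integral_finset_sum _ (fun k _ => (hXXInt m m' k).const_mul _)]
          exact Finset.sum_congr rfl fun k _ => integral_const_mul _ _
  -- collapse the off-diagonal (m ≠ m') terms
  have hcollapse : ∀ m ∈ Finset.range n,
      ∑ m' ∈ Finset.range n, ∑ k, (A m k * A m' k) * ∫ ω, X m k ω * X m' k ω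
        = ∑ k, (A m k * A m k) * ∫ ω, X m k ω * X m k ω := by
    intro m hm
    refine Finset.sum_eq_single_of_mem m hm fun m' _ hne => ?_
    refine Finset.sum_eq_zero fun k _ => ?_
    rw [hoff m m' k (Ne.symm hne), mul_zero]
  rw [Finset.sum_congr rfl hcollapse] at hmain
  -- key bound
  have hone : ((K:ℝ)/2)^d * ((2:ℝ)/K)^d = 1 := by
    rw [← mul_pow, show ((K:ℝ)/2) * ((2:ℝ)/K) = 1 by field_simp, one_pow]
  have hσlt : ∀ k, σ k ^ 2 < 1 := fun k => (sq_lt_one_iff_abs_lt_one _).2 (hS k)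
  have hgeom : ∀ k, ∑ j ∈ Finset.range n, (σ k ^ 2) ^ j ≤ (1 - σ k ^ 2)⁻¹ := by
    intro k
    refine le_trans (Summable.sum_le_tsum (Finset.range n)
      (fun j _ => pow_nonneg (sq_nonneg _) j)
      (summable_geometric_of_lt_one (sq_nonneg _) (hσlt k))) ?_
    exact le_of_eq (tsum_geometric_of_lt_one (sq_nonneg _) (hσlt k))
  have hbound : ∫ ω, ∑ i, E n ω i ^ 2
      ≤ ε ^ 2 * ∑ k, 1 / (1 - S (sVal K d lam k) ^ 2) := by
    rw [hmain]
    calc ((K:ℝ)/2)^d * ∑ m ∈ Finset.range n,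
            ∑ k, (A m k * A m k) * ∫ ω, X m k ω * X m k ω
        ≤ ((K:ℝ)/2)^d * ∑ m ∈ Finset.range n,
            ∑ k, (A m k * A m k) * (ε^2 * ((K:ℝ)/2)^d) := by
          refine mul_le_mul_of_nonneg_left (Finset.sum_le_sum fun m _ =>
            Finset.sum_le_sum fun k _ => ?_) (le_of_lt hC)
          exact mul_le_mul_of_nonneg_left (hdiag m k) (mul_self_nonneg _)
      _ = ∑ m ∈ Finset.range n, ∑ k, ε^2 * (σ k ^ 2) ^ (n-1-m) := by
          rw [Finset.mul_sum]
          refine Finset.sum_congr rfl fun m _ => ?_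
          rw [Finset.mul_sum]
          refine Finset.sum_congr rfl fun k _ => ?_
          rw [hA]
          dsimp only
          have hσe : σ k ^ (n-1-m) * σ k ^ (n-1-m) = (σ k ^ 2) ^ (n-1-m) := by
            rw [← pow_add, ← two_mul, pow_mul]
          calc ((K:ℝ)/2)^d * ((2/(K:ℝ))^d * σ k ^ (n-1-m) * ((2/(K:ℝ))^d * σ k ^ (n-1-m))
                  * (ε^2 * ((K:ℝ)/2)^d))
              = (((K:ℝ)/2)^d * ((2:ℝ)/K)^d) * (((K:ℝ)/2)^d * ((2:ℝ)/K)^d)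
                  * (ε^2 * (σ k ^ (n-1-m) * σ k ^ (n-1-m))) := by ring
            _ = ε^2 * (σ k ^ 2) ^ (n-1-m) := by rw [hone, hσe]; ring
      _ = ε^2 * ∑ k, ∑ m ∈ Finset.range n, (σ k ^ 2) ^ (n-1-m) := by
          rw [Finset.sum_comm, Finset.mul_sum]
          exact Finset.sum_congr rfl fun k _ => by rw [Finset.mul_sum]
      _ = ε^2 * ∑ k, ∑ j ∈ Finset.range n, (σ k ^ 2) ^ j := by
          congr 1
          exact Finset.sum_congr rfl fun k _ =>
            Finset.sum_range_reflect (fun j => (σ k ^ 2) ^ j) n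
      _ ≤ ε^2 * ∑ k, 1 / (1 - S (sVal K d lam k) ^ 2) := by
          refine mul_le_mul_of_nonneg_left (Finset.sum_le_sum fun k _ => ?_)
            (sq_nonneg ε)
          rw [one_div]
          exact hgeom k
  refine ⟨hbound, ?_⟩
  have h2 : ∫ ω, ((K:ℝ)^d)⁻¹ * ∑ i, E n ω i ^ 2
      = ((K:ℝ)^d)⁻¹ * ∫ ω, ∑ i, E n ω i ^ 2 := integral_const_mul _ _
  rw [h2, show ε ^ 2 * ((K:ℝ)^d)⁻¹ * ∑ k : Fin d → Fin (K-1), 1 / (1 - S (sVal K d lam k) ^ 2)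
      = ((K:ℝ)^d)⁻¹ * (ε ^ 2 * ∑ k : Fin d → Fin (K-1), 1 / (1 - S (sVal K d lam k) ^ 2)) by ring]
  exact mul_le_mul_of_nonneg_left hbound (inv_nonneg.2 (pow_nonneg hKR.le d))
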